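/- For every α ≥ 0, every t ∈ ℝ and every u ∈ ℂ, ∫_{{ξ ∈ ℂ : |ξ| ≤ 2}} |ξ|^α e^{i t S̃(u,ξ)} dA(ξ) = (1/2) ∫₀^{2π} ∫₀^{2π} |e^{iφ₁} + e^{iφ₂}|^α e^{i t S(u, e^{iφ₁}, e^{iφ₂})} |sin(φ₁ − φ₂)| dφ₁ dφ₂. -/

import Mathlib

open MeasureTheory

/-- The phase of the linearized Novikov–Veselov equation at energy `E = 1`. -/
noncomputable def Stilde (u ξ : ℂ) : ℝ :=
  ((ξ ^ 3 + (starRingEnd ℂ ξ) ^ 3) * (1 - 3 / ((‖ξ‖ : ℂ) ^ 2))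
    + (1 / 2) * ((starRingEnd ℂ u) * ξ + u * (starRingEnd ℂ ξ))).re

/-- The phase after the change of variables `ξ = λ + λ'` on the unit circle. -/
noncomputable def Sph (u l l' : ℂ) : ℝ :=
  (l ^ 3 + (starRingEnd ℂ l) ^ 3 + l' ^ 3 + (starRingEnd ℂ l') ^ 3
    + (1 / 2) * ((l + l') * (starRingEnd ℂ u) + ((starRingEnd ℂ l) + (starRingEnd ℂ l')) * u)).re

/-! ### Auxiliary material -/

section NVAux

open Complex Set

/-- `e^{ia}`. -/
noncomputable def expI (a : ℝ) : ℂ := Complex.exp (Complex.I * a)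

lemma expI_unit (a : ℝ) : expI a * (starRingEnd ℂ) (expI a) = 1 := by
  unfold expI
  rw [← Complex.exp_conj, ← Complex.exp_add]
  simp [Complex.conj_I]

lemma expI_ne_zero (a : ℝ) : expI a ≠ 0 := Complex.exp_ne_zero _

lemma expI_conj (a : ℝ) : (starRingEnd ℂ) (expI a) = (expI a)⁻¹ :=
  eq_inv_of_mul_eq_one_left (by linear_combination expI_unit a)

lemma abs_expI (a : ℝ) : ‖expI a‖ = 1 := by
  simpa [expI, mul_comm] using Complex.norm_exp_ofReal_mul_I a

lemma expI_inj {a b : ℝ} (h : expI a = expI b) (hd : |a - b| < 2 * Real.pi) : a = b := by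
  unfold expI at h
  rw [Complex.exp_eq_exp_iff_exists_int] at h
  obtain ⟨n, hn⟩ := h
  have : (a : ℂ) = b + n * (2 * Real.pi) := by
    have : Complex.I * a = Complex.I * (b + n * (2 * Real.pi)) := by
      rw [hn]; push_cast; ring
    exact mul_left_cancel₀ Complex.I_ne_zero this
  have h2 : a = b + n * (2 * Real.pi) := by exact_mod_cast this
  have : |(n : ℝ)| * (2 * Real.pi) < 2 * Real.pi := by
    have := hd
    rw [h2] at this
    simpa [abs_mul, abs_of_pos Real.two_pi_pos] using this
  have hn0 : n = 0 := by
    by_contra hne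
    have : (1 : ℝ) ≤ |(n : ℝ)| := by exact_mod_cast Int.one_le_abs (by exact_mod_cast hne)
    nlinarith [Real.two_pi_pos]
  simp [hn0] at h2; exact h2

lemma expI_sum_ne {a b : ℝ} (hab : a < b) (hd : b - a < 2 * Real.pi) (hpi : b - a ≠ Real.pi) :
    expI a + expI b ≠ 0 := by
  intro hc
  have hb : expI b = expI (a + Real.pi) := by
    have : expI b = - expI a := by linear_combination hc
    rw [this]
    unfold expI
    push_cast
    rw [mul_add, Complex.exp_add, mul_comm Complex.I (Real.pi : ℂ), Complex.exp_pi_mul_I]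
    ring
  have := expI_inj hb (by rw [abs_lt]; constructor <;> nlinarith [Real.pi_pos])
  exact hpi (by linarith)

/-- The key algebraic identity between the two phases. -/
lemma phase_eq (u l m : ℂ) (hl : l * (starRingEnd ℂ l) = 1) (hm : m * (starRingEnd ℂ m) = 1)
    (h : l + m ≠ 0) : Stilde u (l + m) = Sph u l m := by
  have hl0 : l ≠ 0 := by rintro rfl; simp at hl
  have hm0 : m ≠ 0 := by rintro rfl; simp at hm
  have hcl : (starRingEnd ℂ l) = l⁻¹ := by field_simp [eq_comm] at hl ⊢; linear_combination hl
  have hcm : (starRingEnd ℂ m) = m⁻¹ := by field_simp [eq_comm] at hm ⊢; linear_combination hm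
  have habs : ((‖l + m‖ : ℂ)) ^ 2 = (l + m) ^ 2 * (l * m)⁻¹ := by
    rw [← Complex.ofReal_pow, Complex.sq_norm, ← Complex.mul_conj, map_add, hcl, hcm]
    field_simp
    ring
  have h2 : l * m * 2 + l ^ 2 + m ^ 2 ≠ 0 := by
    intro hc
    exact pow_ne_zero 2 h (by linear_combination hc)
  unfold Stilde Sph
  congr 1
  rw [map_add, hcl, hcm, habs]
  field_simp
  ring

/-- The change of variables map. -/
noncomputable def fmap (z : ℂ) : ℂ := expI z.re + expI z.im

/-- Its derivative. -/
noncomputable def fder (z : ℂ) : ℂ →L[ℝ] ℂ :=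
  Complex.reCLM.smulRight (Complex.I * expI z.re)
    + Complex.imCLM.smulRight (Complex.I * expI z.im)

/-- The parameter region. -/
def sreg : Set ℂ :=
  {z : ℂ | 0 < z.re ∧ z.re < z.im ∧ z.im ≤ 2 * Real.pi ∧ z.im - z.re ≠ Real.pi}

lemma sreg_measurable : MeasurableSet sreg := by
  have h1 : MeasurableSet {z : ℂ | 0 < z.re} :=
    measurableSet_lt measurable_const Complex.measurable_re
  have h2 : MeasurableSet {z : ℂ | z.re < z.im} :=
    measurableSet_lt Complex.measurable_re Complex.measurable_im
  have h3 : MeasurableSet {z : ℂ | z.im ≤ 2 * Real.pi} :=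
    measurableSet_le Complex.measurable_im measurable_const
  have h4 : MeasurableSet {z : ℂ | z.im - z.re = Real.pi} :=
    measurableSet_eq_fun (Complex.measurable_im.sub Complex.measurable_re) measurable_const
  exact (h1.inter (h2.inter (h3.inter h4.compl)) : _)

lemma hasFDeriv_part (L : ℂ →L[ℝ] ℝ) (z : ℂ) :
    HasFDerivAt (fun w : ℂ => Complex.exp (Complex.I * (L w : ℂ)))
      (L.smulRight (Complex.I * Complex.exp (Complex.I * (L z : ℂ)))) z := by
  have h1 : HasFDerivAt (fun w : ℂ => Complex.I * (L w : ℂ)) (L.smulRight Complex.I) z := by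
    have := (L.hasFDerivAt (x := z)).smul_const (Complex.I)
    simpa [smul_eq_mul, mul_comm] using this
  have h2 := (Complex.hasDerivAt_exp (Complex.I * (L z : ℂ))).hasFDerivAt.restrictScalars ℝ
  have := h2.comp z h1
  refine this.congr_fderiv ?_
  ext w
  simp [smul_eq_mul]
  ring

lemma fmap_hasFDerivAt (z : ℂ) : HasFDerivAt fmap (fder z) z :=
  (hasFDeriv_part Complex.reCLM z).add (hasFDeriv_part Complex.imCLM z)

lemma det_formula (v w : ℂ) :
    (Complex.reCLM.smulRight v + Complex.imCLM.smulRight w : ℂ →L[ℝ] ℂ).det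
      = v.re * w.im - v.im * w.re := by
  rw [ContinuousLinearMap.det, ← LinearMap.det_toMatrix Complex.basisOneI, Matrix.det_fin_two]
  simp [LinearMap.toMatrix_apply, Complex.coe_basisOneI_repr, Complex.coe_basisOneI]
  ring

lemma fder_det (z : ℂ) : (fder z).det = Real.sin (z.im - z.re) := by
  unfold fder
  rw [det_formula]
  simp only [expI, mul_comm Complex.I, Complex.mul_re, Complex.mul_im,
    Complex.I_re, Complex.I_im, Complex.exp_ofReal_mul_I_re, Complex.exp_ofReal_mul_I_im,
    Real.sin_sub]
  ring


lemma fmap_ne_zero {z : ℂ} (hz : z ∈ sreg) : fmap z ≠ 0 := by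
  obtain ⟨h1, h2, h3, h4⟩ := hz
  exact expI_sum_ne h2 (by nlinarith [Real.pi_pos]) h4

lemma sreg_injOn : Set.InjOn fmap sreg := by
  rintro z hz w hw hzw
  obtain ⟨hz1, hz2, hz3, hz4⟩ := hz
  obtain ⟨hw1, hw2, hw3, hw4⟩ := hw
  set a := z.re; set b := z.im; set c := w.re; set d := w.im
  have hsum : expI a + expI b = expI c + expI d := hzw
  have hxi : expI a + expI b ≠ 0 := expI_sum_ne hz2 (by nlinarith) hz4
  have hconj := congrArg (starRingEnd ℂ) hsum
  rw [map_add, map_add, expI_conj, expI_conj, expI_conj, expI_conj] at hconj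
  have hprod : expI a * expI b = expI c * expI d := by
    have e1 := expI_ne_zero a; have e2 := expI_ne_zero b
    have e3 := expI_ne_zero c; have e4 := expI_ne_zero d
    field_simp at hconj
    -- hconj : (expI b + expI a) * (expI c * expI d) = (expI d + expI c) * (expI a * expI b)
    rcases mul_eq_mul_right_iff.1 (show
      (expI a * expI b) * (expI c + expI d) = (expI c * expI d) * (expI c + expI d) by
        linear_combination (expI c * expI d) * hsum - hconj) with h | h
    · exact h
    · exact absurd (hsum.trans h) hxi
  have hroot : (expI c - expI a) * (expI c - expI b) = 0 := by
    linear_combination (- expI c) * hsum + hprod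
  have hinj : ∀ x y : ℝ, 0 < x → x ≤ 2 * Real.pi → 0 < y → y ≤ 2 * Real.pi →
      expI x = expI y → x = y := by
    intro x y hx1 hx2 hy1 hy2 hxy
    exact expI_inj hxy (by rw [abs_lt]; constructor <;> nlinarith [Real.pi_pos])
  rcases mul_eq_zero.1 hroot with h | h
  · -- expI c = expI a
    have hca : c = a := hinj c a hw1 (by linarith) hz1 (by linarith) (by linear_combination h)
    have hdb : d = b := by
      refine hinj d b (by linarith) hw3 (by linarith) hz3 ?_
      have : expI d = expI b := by linear_combination - hsum - h
      exact this
    exact Complex.ext hca.symm hdb.symm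
  · -- expI c = expI b, then expI d = expI a, contradiction with orders
    have hcb : c = b := hinj c b hw1 (by linarith) (by linarith) hz3 (by linear_combination h)
    have hda : d = a := by
      refine hinj d a (by linarith) hw3 hz1 (by linarith) ?_
      linear_combination - hsum - h
    linarith

/-- angle in (0, 2π] of a unit complex number -/
noncomputable def ang (z : ℂ) : ℝ :=
  if 0 < Complex.arg z then Complex.arg z else Complex.arg z + 2 * Real.pi

lemma ang_pos {z : ℂ} (hz : ‖z‖ = 1) : 0 < ang z := by
  unfold ang
  split_ifs with h
  · exact h
  · nlinarith [Complex.neg_pi_lt_arg z, Real.pi_pos]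

lemma ang_le {z : ℂ} : ang z ≤ 2 * Real.pi := by
  unfold ang
  split_ifs with h
  · nlinarith [Complex.arg_le_pi z, Real.pi_pos]
  · nlinarith [not_lt.1 h]

lemma expI_ang {z : ℂ} (hz : ‖z‖ = 1) : expI (ang z) = z := by
  have key : expI (Complex.arg z) = z := by
    have := Complex.norm_mul_exp_arg_mul_I z
    rw [hz] at this
    simpa [expI, mul_comm] using this
  unfold ang
  split_ifs with h
  · exact key
  · have per : expI (Complex.arg z + 2 * Real.pi) = expI (Complex.arg z) := by
      unfold expI
      push_cast
      rw [mul_add, Complex.exp_add]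
      have h2 : Complex.I * (2 * (Real.pi : ℂ)) = 2 * (Real.pi : ℂ) * Complex.I := by ring
      rw [h2, Complex.exp_two_pi_mul_I, mul_one]
    exact per.trans key

lemma surj_key {ξ : ℂ} (h0 : 0 < ‖ξ‖) (h2 : ‖ξ‖ < 2)
    (h1 : ‖ξ - 1‖ ≠ 1) : ξ ∈ fmap '' sreg := by
  set r := ‖ξ‖ with hr
  set β := Real.arccos (r / 2) with hβ
  have hβ1 : 0 < β := Real.arccos_pos.2 (by linarith)
  have hβ2 : β < Real.pi / 2 := Real.arccos_lt_pi_div_two.2 (by linarith)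
  have hcos : Real.cos β = r / 2 := Real.cos_arccos (by linarith) (by linarith)
  set d : ℂ := ξ / r with hd
  have hrne : (r : ℂ) ≠ 0 := by exact_mod_cast ne_of_gt h0
  have habsd : ‖d‖ = 1 := by
    rw [hd, norm_div, Complex.norm_real, Real.norm_eq_abs, abs_of_pos h0, div_self (ne_of_gt h0)]
  set lam : ℂ := d * expI β with hlam
  set mu : ℂ := d * expI (-β) with hmu
  have habslam : ‖lam‖ = 1 := by rw [hlam, norm_mul, habsd, abs_expI, one_mul]
  have habsmu : ‖mu‖ = 1 := by rw [hmu, norm_mul, habsd, abs_expI, one_mul]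
  have hsum : lam + mu = ξ := by
    rw [hlam, hmu, ← mul_add]
    have : expI β + expI (-β) = (2 * Real.cos β : ℝ) := by
      unfold expI
      rw [mul_comm Complex.I (β:ℂ), mul_comm Complex.I ((-β:ℝ):ℂ)]
      rw [Complex.exp_mul_I, Complex.exp_mul_I]
      push_cast
      simp [Complex.cos_neg, Complex.sin_neg]
      ring
    rw [this, hcos]
    rw [hd]
    push_cast
    field_simp
  have hlamne1 : lam ≠ 1 := by
    intro hc
    apply h1
    have : mu = ξ - 1 := by rw [← hsum, hc]; ring
    rw [← this, habsmu]
  have hmune1 : mu ≠ 1 := by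
    intro hc
    apply h1
    have : lam = ξ - 1 := by rw [← hsum, hc]; ring
    rw [← this, habslam]
  have hlamnemu : lam ≠ mu := by
    intro hc
    have hd0 : d ≠ 0 := by
      intro hdd; rw [hdd] at habsd; simp at habsd
    have : expI β = expI (-β) := mul_left_cancel₀ hd0 hc
    have hββ : β = -β := expI_inj this (by rw [abs_lt]; constructor <;> nlinarith [Real.pi_pos])
    linarith
  -- angles
  have hanglam : expI (ang lam) = lam := expI_ang habslam
  have hangmu : expI (ang mu) = mu := expI_ang habsmu
  have hangne : ang lam ≠ ang mu := fun hc => hlamnemu (by rw [← hanglam, ← hangmu, hc])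
  set a := min (ang lam) (ang mu) with ha
  set b := max (ang lam) (ang mu) with hb
  have hab : a < b := by
    rcases lt_or_gt_of_ne hangne with h | h
    · rw [ha, hb, min_eq_left h.le, max_eq_right h.le]; exact h
    · rw [ha, hb, min_eq_right h.le, max_eq_left h.le]; exact h
  have hsum2 : expI a + expI b = ξ := by
    rcases le_total (ang lam) (ang mu) with h | h
    · rw [ha, hb, min_eq_left h, max_eq_right h, hanglam, hangmu, hsum]
    · rw [ha, hb, min_eq_right h, max_eq_left h, hangmu, hanglam]
      rw [← hsum]; ring
  have ha1 : 0 < a := lt_min (ang_pos habslam) (ang_pos habsmu)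
  have hb1 : b ≤ 2 * Real.pi := max_le ang_le ang_le
  have hbma : b - a ≠ Real.pi := by
    intro hc
    have hgoal : expI b = - expI a := by
      have : b = a + Real.pi := by linarith
      rw [this]
      unfold expI
      push_cast
      rw [mul_add, Complex.exp_add, mul_comm Complex.I (Real.pi:ℂ), Complex.exp_pi_mul_I]
      ring
    have hξ0 : ξ = 0 := by rw [← hsum2, hgoal]; ring
    rw [hr, hξ0] at h0
    simp at h0
  refine ⟨⟨a, b⟩, ⟨ha1, hab, hb1, hbma⟩, ?_⟩
  exact hsum2

lemma fmap_image_ae : fmap '' sreg =ᵐ[(volume : Measure ℂ)] {ξ : ℂ | ‖ξ‖ ≤ 2} := by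
  rw [MeasureTheory.ae_eq_set]
  constructor
  · have hsub : fmap '' sreg \ {ξ : ℂ | ‖ξ‖ ≤ 2} = ∅ := by
      rw [Set.diff_eq_empty]
      rintro ξ ⟨z, _, rfl⟩
      have h1 := abs_expI z.re
      have h2 := abs_expI z.im
      have := norm_add_le (expI z.re) (expI z.im)
      simp only [Set.mem_setOf_eq, fmap]
      linarith
    rw [hsub]; simp
  · apply measure_mono_null
      (t := Metric.sphere (0:ℂ) 2 ∪ ({0} ∪ Metric.sphere (1:ℂ) 1))
    · rintro ξ ⟨hξ2, hξni⟩
      simp only [Set.mem_setOf_eq] at hξ2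
      by_cases hs2 : ‖ξ‖ = 2
      · left; simp [Complex.dist_eq, hs2]
      by_cases hs0 : ξ = 0
      · right; left; simp [hs0]
      by_cases hs1 : ‖ξ - 1‖ = 1
      · right; right; simp [Complex.dist_eq, hs1]
      exfalso
      exact hξni (surj_key (by simpa [norm_pos_iff] using hs0)
        (lt_of_le_of_ne hξ2 hs2) hs1)
    · rw [measure_union_null_iff]
      refine ⟨Measure.addHaar_sphere _ _ _, ?_⟩
      rw [measure_union_null_iff]
      exact ⟨measure_singleton _, Measure.addHaar_sphere _ _ _⟩

/-- The integrand on the square. -/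
noncomputable def Gfun (α t : ℝ) (u : ℂ) (p : ℝ × ℝ) : ℂ :=
  ((‖Complex.exp (Complex.I * (p.1 : ℂ)) + Complex.exp (Complex.I * (p.2 : ℂ))‖ ^ α : ℝ) : ℂ)
    * Complex.exp (Complex.I * (t : ℂ) *
        ((Sph u (Complex.exp (Complex.I * (p.1 : ℂ))) (Complex.exp (Complex.I * (p.2 : ℂ))) : ℝ) : ℂ))
    * ((|Real.sin (p.1 - p.2)| : ℝ) : ℂ)

/-- The integrand on the disc. -/
noncomputable def gfun (α t : ℝ) (u : ℂ) (ξ : ℂ) : ℂ :=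
  ((‖ξ‖ ^ α : ℝ) : ℂ) * Complex.exp (Complex.I * (t : ℂ) * ((Stilde u ξ : ℝ) : ℂ))

lemma Gfun_expI (α t : ℝ) (u : ℂ) (p : ℝ × ℝ) :
    Gfun α t u p = ((‖expI p.1 + expI p.2‖ ^ α : ℝ) : ℂ)
      * Complex.exp (Complex.I * (t : ℂ) * ((Sph u (expI p.1) (expI p.2) : ℝ) : ℂ))
      * ((|Real.sin (p.1 - p.2)| : ℝ) : ℂ) := rfl

lemma pointwise_eq (α t : ℝ) (u : ℂ) {z : ℂ} (hz : z ∈ sreg) :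
    |(fder z).det| • gfun α t u (fmap z) = Gfun α t u (z.re, z.im) := by
  obtain ⟨h1, h2, h3, h4⟩ := hz
  have hne : expI z.re + expI z.im ≠ 0 := expI_sum_ne h2 (by nlinarith [Real.pi_pos]) h4
  have hph : Stilde u (expI z.re + expI z.im) = Sph u (expI z.re) (expI z.im) :=
    phase_eq u _ _ (expI_unit _) (expI_unit _) hne
  rw [fder_det, Gfun_expI]
  unfold gfun fmap
  rw [hph, Complex.real_smul]
  have hsin : |Real.sin (z.im - z.re)| = |Real.sin (z.re - z.im)| := by
    rw [← neg_sub z.re z.im, Real.sin_neg, abs_neg]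
  rw [hsin]
  push_cast
  ring

lemma Gfun_continuous (α t : ℝ) (hα : 0 ≤ α) (u : ℂ) : Continuous (Gfun α t u) := by
  have hexp : Continuous expI :=
    Complex.continuous_exp.comp (continuous_const.mul Complex.continuous_ofReal)
  have hsum : Continuous fun p : ℝ × ℝ => expI p.1 + expI p.2 :=
    (hexp.comp continuous_fst).add (hexp.comp continuous_snd)
  have h1 : Continuous fun p : ℝ × ℝ => (‖expI p.1 + expI p.2‖) ^ α :=
    (continuous_norm.comp hsum).rpow_const (fun p => Or.inr hα)
  have hSph : Continuous fun p : ℝ × ℝ => Sph u (expI p.1) (expI p.2) := by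
    unfold Sph
    apply Complex.continuous_re.comp
    have hc1 : Continuous fun p : ℝ × ℝ => expI p.1 := hexp.comp continuous_fst
    have hc2 : Continuous fun p : ℝ × ℝ => expI p.2 := hexp.comp continuous_snd
    have hc1' : Continuous fun p : ℝ × ℝ => (starRingEnd ℂ) (expI p.1) :=
      Complex.continuous_conj.comp hc1
    have hc2' : Continuous fun p : ℝ × ℝ => (starRingEnd ℂ) (expI p.2) :=
      Complex.continuous_conj.comp hc2
    fun_prop
  have hsin : Continuous fun p : ℝ × ℝ => |Real.sin (p.1 - p.2)| :=
    (Real.continuous_sin.comp (continuous_fst.sub continuous_snd)).abs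
  have : Continuous fun p : ℝ × ℝ => ((‖expI p.1 + expI p.2‖ ^ α : ℝ) : ℂ)
      * Complex.exp (Complex.I * (t : ℂ) * ((Sph u (expI p.1) (expI p.2) : ℝ) : ℂ))
      * ((|Real.sin (p.1 - p.2)| : ℝ) : ℂ) := by
    apply Continuous.mul
    apply Continuous.mul
    · exact Complex.continuous_ofReal.comp h1
    · exact Complex.continuous_exp.comp
        (continuous_const.mul (Complex.continuous_ofReal.comp hSph))
    · exact Complex.continuous_ofReal.comp hsin
  exact this

lemma Gfun_swap (α t : ℝ) (u : ℂ) (p : ℝ × ℝ) :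
    Gfun α t u (p.2, p.1) = Gfun α t u p := by
  unfold Gfun
  have h1 : Complex.exp (Complex.I * (p.2 : ℂ)) + Complex.exp (Complex.I * (p.1 : ℂ))
      = Complex.exp (Complex.I * (p.1 : ℂ)) + Complex.exp (Complex.I * (p.2 : ℂ)) := add_comm _ _
  have h2 : Sph u (Complex.exp (Complex.I * (p.2 : ℂ))) (Complex.exp (Complex.I * (p.1 : ℂ)))
      = Sph u (Complex.exp (Complex.I * (p.1 : ℂ))) (Complex.exp (Complex.I * (p.2 : ℂ))) := by
    unfold Sph; congr 1; ring
  have h3 : |Real.sin (p.2 - p.1)| = |Real.sin (p.1 - p.2)| := by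
    rw [← neg_sub p.1 p.2, Real.sin_neg, abs_neg]
  simp only [h1, h2, h3]

end NVAux

theorem stmt2 (α : ℝ) (hα : 0 ≤ α) (t : ℝ) (u : ℂ) :
    (∫ ξ in {ξ : ℂ | ‖ξ‖ ≤ 2},
        ((‖ξ‖ ^ α : ℝ) : ℂ) *
          Complex.exp (Complex.I * (t : ℂ) * ((Stilde u ξ : ℝ) : ℂ)))
      = (1 / 2 : ℂ) *
        ∫ φ₁ in (0 : ℝ)..(2 * Real.pi), ∫ φ₂ in (0 : ℝ)..(2 * Real.pi),
          ((‖Complex.exp (Complex.I * (φ₁ : ℂ)) + Complex.exp (Complex.I * (φ₂ : ℂ))‖ ^ α : ℝ) : ℂ)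
            * Complex.exp (Complex.I * (t : ℂ) *
                ((Sph u (Complex.exp (Complex.I * (φ₁ : ℂ))) (Complex.exp (Complex.I * (φ₂ : ℂ))) : ℝ) : ℂ))
            * ((|Real.sin (φ₁ - φ₂)| : ℝ) : ℂ) := by
  have hπ : (0:ℝ) < Real.pi := Real.pi_pos
  set Q : Set (ℝ × ℝ) := Set.Ioc 0 (2*Real.pi) ×ˢ Set.Ioc 0 (2*Real.pi) with hQ
  set T1 : Set (ℝ × ℝ) := Q ∩ {p | p.1 < p.2} with hT1
  set T2 : Set (ℝ × ℝ) := Q ∩ {p | p.2 < p.1} with hT2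
  set Dg : Set (ℝ × ℝ) := Q ∩ {p | p.1 = p.2} with hDg
  have hQm : MeasurableSet Q := measurableSet_Ioc.prod measurableSet_Ioc
  have hT1m : MeasurableSet T1 := hQm.inter (measurableSet_lt measurable_fst measurable_snd)
  have hT2m : MeasurableSet T2 := hQm.inter (measurableSet_lt measurable_snd measurable_fst)
  have hDgm : MeasurableSet Dg := hQm.inter (measurableSet_eq_fun measurable_fst measurable_snd)
  have hGc := Gfun_continuous α t hα u
  have hGint : ∀ s : Set (ℝ × ℝ), s ⊆ Q → IntegrableOn (Gfun α t u) s := by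
    intro s hs
    have hcomp : IsCompact (Set.Icc (0:ℝ) (2*Real.pi) ×ˢ Set.Icc (0:ℝ) (2*Real.pi)) :=
      isCompact_Icc.prod isCompact_Icc
    refine (hGc.continuousOn.integrableOn_compact hcomp).mono_set ?_
    exact hs.trans (Set.prod_mono Set.Ioc_subset_Icc_self Set.Ioc_subset_Icc_self)
  -- iterated integral equals the integral over the square
  have hR1 : (∫ φ₁ in (0:ℝ)..(2*Real.pi), ∫ φ₂ in (0:ℝ)..(2*Real.pi), Gfun α t u (φ₁, φ₂))
      = ∫ p in Q, Gfun α t u p := by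
    rw [intervalIntegral.integral_of_le (by positivity)]
    have hin : ∀ φ₁ : ℝ, (∫ φ₂ in (0:ℝ)..(2*Real.pi), Gfun α t u (φ₁, φ₂))
        = ∫ φ₂ in Set.Ioc (0:ℝ) (2*Real.pi), Gfun α t u (φ₁, φ₂) :=
      fun _ => intervalIntegral.integral_of_le (by positivity)
    simp_rw [hin]
    have hint : Integrable (Gfun α t u)
        ((volume.restrict (Set.Ioc (0:ℝ) (2*Real.pi))).prod
          (volume.restrict (Set.Ioc (0:ℝ) (2*Real.pi)))) := by
      rw [Measure.prod_restrict, ← Measure.volume_eq_prod]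
      exact hGint Q (le_refl _)
    rw [← MeasureTheory.integral_prod _ hint, Measure.prod_restrict, ← Measure.volume_eq_prod]
  -- split the square integral
  have hDg0 : (∫ p in Dg, Gfun α t u p) = 0 := by
    rw [show (∫ p in Dg, Gfun α t u p) = ∫ p in Dg, (0:ℂ) from
      setIntegral_congr_fun hDgm (fun p hp => by
        have h12 : p.1 = p.2 := hp.2
        unfold Gfun
        rw [show p.1 - p.2 = 0 by rw [h12]; ring, Real.sin_zero, abs_zero]
        simp)]
    simp
  have hsplit : (∫ p in Q, Gfun α t u p)
      = (∫ p in T1, Gfun α t u p) + (∫ p in T2, Gfun α t u p) := by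
    have hQeq : Q = (T1 ∪ T2) ∪ Dg := by
      ext p
      simp only [hT1, hT2, hDg, Set.mem_union, Set.mem_inter_iff, Set.mem_setOf_eq]
      constructor
      · intro hp
        rcases lt_trichotomy p.1 p.2 with h | h | h
        · exact Or.inl (Or.inl ⟨hp, h⟩)
        · exact Or.inr ⟨hp, h⟩
        · exact Or.inl (Or.inr ⟨hp, h⟩)
      · rintro ((⟨hp, _⟩ | ⟨hp, _⟩) | ⟨hp, _⟩) <;> exact hp
    have hdisj1 : Disjoint (T1 ∪ T2) Dg := by
      rw [Set.disjoint_left]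
      rintro p (⟨_, h⟩ | ⟨_, h⟩) ⟨_, he⟩ <;> simp only [Set.mem_setOf_eq] at h he <;> linarith [he.le, he.ge]
    have hdisj2 : Disjoint T1 T2 := by
      rw [Set.disjoint_left]
      rintro p ⟨_, h⟩ ⟨_, h'⟩
      simp only [Set.mem_setOf_eq] at h h'
      linarith
    have hsubQ1 : T1 ⊆ Q := Set.inter_subset_left
    have hsubQ2 : T2 ⊆ Q := Set.inter_subset_left
    have hsubQD : Dg ⊆ Q := Set.inter_subset_left
    rw [hQeq, setIntegral_union hdisj1 hDgm
        ((hGint T1 hsubQ1).union (hGint T2 hsubQ2)) (hGint Dg hsubQD),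
      setIntegral_union hdisj2 hT2m (hGint T1 hsubQ1) (hGint T2 hsubQ2), hDg0, add_zero]
  -- the swap symmetry
  have hswap : (∫ p in T2, Gfun α t u p) = ∫ p in T1, Gfun α t u p := by
    have hpres : MeasurePreserving (Prod.swap : ℝ × ℝ → ℝ × ℝ) volume volume := by
      rw [Measure.volume_eq_prod]
      exact Measure.measurePreserving_swap
    have hemb : MeasurableEmbedding (Prod.swap : ℝ × ℝ → ℝ × ℝ) :=
      MeasurableEquiv.prodComm.measurableEmbedding
    have hpre : (Prod.swap : ℝ × ℝ → ℝ × ℝ) ⁻¹' T2 = T1 := by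
      ext p
      simp only [hT1, hT2, hQ, Set.mem_preimage, Prod.fst_swap, Prod.snd_swap,
        Set.mem_inter_iff, Set.mem_prod, Set.mem_Ioc, Set.mem_setOf_eq]
      tauto
    calc (∫ p in T2, Gfun α t u p)
        = ∫ p in (Prod.swap : ℝ × ℝ → ℝ × ℝ) ⁻¹' T2, Gfun α t u (Prod.swap p) :=
          (hpres.setIntegral_preimage_emb hemb _ _).symm
      _ = ∫ p in T1, Gfun α t u p := by
          rw [hpre]
          exact setIntegral_congr_fun hT1m (fun p _ => Gfun_swap α t u p)
  -- LHS equals the integral over T1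
  have hL : (∫ ξ in {ξ : ℂ | ‖ξ‖ ≤ 2}, gfun α t u ξ) = ∫ p in T1, Gfun α t u p := by
    rw [← setIntegral_congr_set fmap_image_ae,
      integral_image_eq_integral_abs_det_fderiv_smul volume sreg_measurable
        (fun x _ => (fmap_hasFDerivAt x).hasFDerivWithinAt) sreg_injOn,
      setIntegral_congr_fun sreg_measurable (fun z hz => pointwise_eq α t u hz)]
    -- transfer T1 to ℂ
    have hprem : MeasurableSet (Complex.measurableEquivRealProd ⁻¹' T1) :=
      hT1m.preimage Complex.measurableEquivRealProd.measurable
    have hpreeq : Complex.measurableEquivRealProd ⁻¹' T1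
        = sreg ∪ ((Complex.measurableEquivRealProd ⁻¹' T1) ∩ {z : ℂ | z.im - z.re = Real.pi}) := by
      ext z
      simp only [Set.mem_preimage, Complex.measurableEquivRealProd_apply, hT1, hQ,
        Set.mem_inter_iff, Set.mem_prod, Set.mem_Ioc, Set.mem_setOf_eq, Set.mem_union, sreg]
      constructor
      · rintro ⟨⟨⟨hre0, hre2⟩, ⟨him0, him2⟩⟩, hlt⟩
        by_cases hp : z.im - z.re = Real.pi
        · exact Or.inr ⟨⟨⟨⟨hre0, hre2⟩, ⟨him0, him2⟩⟩, hlt⟩, hp⟩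
        · exact Or.inl ⟨hre0, hlt, him2, hp⟩
      · rintro (⟨h1, h2, h3, _⟩ | ⟨hm, _⟩)
        · exact ⟨⟨⟨h1, by linarith⟩, ⟨by linarith, h3⟩⟩, h2⟩
        · exact hm
    have hFccont : Continuous (fun z : ℂ => Gfun α t u (z.re, z.im)) :=
      hGc.comp (Complex.continuous_re.prodMk Complex.continuous_im)
    have hFcint : IntegrableOn (fun z : ℂ => Gfun α t u (z.re, z.im))
        (Metric.closedBall (0:ℂ) (4*Real.pi + 1)) :=
      hFccont.continuousOn.integrableOn_compact (isCompact_closedBall _ _)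
    have hball : Complex.measurableEquivRealProd ⁻¹' T1 ⊆ Metric.closedBall (0:ℂ) (4*Real.pi + 1) := by
      rintro z hz
      simp only [Set.mem_preimage, Complex.measurableEquivRealProd_apply, hT1, hQ,
        Set.mem_inter_iff, Set.mem_prod, Set.mem_Ioc, Set.mem_setOf_eq] at hz
      obtain ⟨⟨⟨h1, h2⟩, ⟨h3, h4⟩⟩, _⟩ := hz
      rw [Metric.mem_closedBall, Complex.dist_eq, sub_zero]
      calc ‖z‖ ≤ |z.re| + |z.im| := Complex.norm_le_abs_re_add_abs_im z
        _ ≤ 4*Real.pi + 1 := by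
            rw [abs_of_pos h1, abs_of_pos h3]; linarith
    have hsregsub : sreg ⊆ Complex.measurableEquivRealProd ⁻¹' T1 := by
      rintro z ⟨h1, h2, h3, _⟩
      simp only [Set.mem_preimage, Complex.measurableEquivRealProd_apply, hT1, hQ,
        Set.mem_inter_iff, Set.mem_prod, Set.mem_Ioc, Set.mem_setOf_eq]
      exact ⟨⟨⟨h1, by linarith⟩, ⟨by linarith, h3⟩⟩, h2⟩
    have hlinem : MeasurableSet ((Complex.measurableEquivRealProd ⁻¹' T1) ∩ {z : ℂ | z.im - z.re = Real.pi}) :=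
      hprem.inter (measurableSet_eq_fun (Complex.measurable_im.sub Complex.measurable_re)
        measurable_const)
    have hdisj : Disjoint sreg ((Complex.measurableEquivRealProd ⁻¹' T1) ∩ {z : ℂ | z.im - z.re = Real.pi}) := by
      rw [Set.disjoint_left]
      rintro z ⟨_, _, _, h4⟩ ⟨_, hm⟩
      exact h4 hm
    have hline0 : (∫ z in (Complex.measurableEquivRealProd ⁻¹' T1) ∩ {z : ℂ | z.im - z.re = Real.pi},
        Gfun α t u (z.re, z.im)) = 0 := by
      rw [show (∫ z in (Complex.measurableEquivRealProd ⁻¹' T1) ∩ {z : ℂ | z.im - z.re = Real.pi},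
          Gfun α t u (z.re, z.im)) = ∫ z in (Complex.measurableEquivRealProd ⁻¹' T1) ∩ {z : ℂ | z.im - z.re = Real.pi}, (0:ℂ) from
        setIntegral_congr_fun hlinem (fun z hz => by
          have hm : z.im - z.re = Real.pi := hz.2
          unfold Gfun
          rw [show z.re - z.im = -Real.pi by linarith, Real.sin_neg, Real.sin_pi]
          simp)]
      simp
    have key : (∫ p in T1, Gfun α t u p) = ∫ z in sreg, Gfun α t u (z.re, z.im) := by
      rw [← Complex.volume_preserving_equiv_real_prod.setIntegral_preimage_emb
          Complex.measurableEquivRealProd.measurableEmbedding (Gfun α t u) T1]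
      have : (∫ z in Complex.measurableEquivRealProd ⁻¹' T1,
          Gfun α t u (Complex.measurableEquivRealProd z))
          = ∫ z in Complex.measurableEquivRealProd ⁻¹' T1, Gfun α t u (z.re, z.im) := rfl
      rw [this, hpreeq, setIntegral_union hdisj hlinem
        (hFcint.mono_set (hsregsub.trans hball))
        (hFcint.mono_set ((Set.inter_subset_left).trans hball)), hline0, add_zero]
    exact key.symm
  -- conclude
  have hmain : (∫ ξ in {ξ : ℂ | ‖ξ‖ ≤ 2}, gfun α t u ξ)
      = (1 / 2 : ℂ) * ∫ φ₁ in (0:ℝ)..(2*Real.pi), ∫ φ₂ in (0:ℝ)..(2*Real.pi),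
          Gfun α t u (φ₁, φ₂) := by
    rw [hL, hR1, hsplit, hswap]
    ring
  exact hmain
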